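/- Let p ∈ [1,∞) with conjugate exponent q, and let R ⊆ P_q(ℝ) satisfy Assumption (OT)(i) with L_R := sup_{r ∈ R} M_q(r). Then the transport-based risk measure ρ_R : L^p(Ω,ℝ) → ℝ is L_R-Lipschitz continuous: for all X₁, X₂ ∈ L^p(Ω,ℝ), |ρ_R(X₂) − ρ_R(X₁)| ≤ L_R · ‖X₂ − X₁‖_{L^p(Ω,ℝ)}. -/

import Mathlib

open MeasureTheory ENNReal ProbabilityTheory

/-- `M_s(m)`: the moment of order `s ∈ [1,∞]` of a measure `m` on `ℝ`
(for `s = ∞`, the essential supremum of `|x|`, i.e. the sup of `|x|` over the support). -/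
noncomputable def Mmom (s : ℝ≥0∞) (m : Measure ℝ) : ℝ≥0∞ :=
  eLpNorm (fun x : ℝ => x) s m

/-- Assumption (OT)(i): `R` is a bounded set of probability measures with finite `q`-moment. -/
def OTone (q : ℝ≥0∞) (R : Set (Measure ℝ)) : Prop :=
  (∀ r ∈ R, IsProbabilityMeasure r) ∧ (⨆ r ∈ R, Mmom q r) < ⊤

/-- Assumption (OT)(ii): every `r ∈ R` is supported in `[0,∞)` and has expectation `1`. -/
def OTtwo (R : Set (Measure ℝ)) : Prop :=
  ∀ r ∈ R, r (Set.Iio (0:ℝ)) = 0 ∧ ∫⁻ y, ENNReal.ofReal y ∂r = 1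

/-- The value `χ_R(m)` of the generalized optimal transport problem: the supremum of
`∫ x·y dπ` over transport plans `π` with first marginal `m` and second marginal in `R`. -/
noncomputable def chi (R : Set (Measure ℝ)) (m : Measure ℝ) : ℝ :=
  sSup {v : ℝ | ∃ π : Measure (ℝ × ℝ), IsProbabilityMeasure π ∧
    π.map Prod.fst = m ∧ π.map Prod.snd ∈ R ∧ v = ∫ z : ℝ × ℝ, z.1 * z.2 ∂π}

section Helpers

variable {α β γ : Type*} [MeasurableSpace α] [MeasurableSpace β] [MeasurableSpace γ]

/-- Hölder inequality giving integrability and a bound on the integral of a product. -/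
lemma holder_aux {p q : ℝ≥0∞} (hpq : p⁻¹ + q⁻¹ = 1)
    (μ : Measure α) (f g : α → ℝ)
    (hf : AEStronglyMeasurable f μ) (hg : AEStronglyMeasurable g μ)
    (hfp : eLpNorm f p μ ≠ ⊤) (hgq : eLpNorm g q μ ≠ ⊤) :
    Integrable (fun x => f x * g x) μ ∧
      |∫ x, f x * g x ∂μ| ≤ (eLpNorm f p μ).toReal * (eLpNorm g q μ).toReal := by
  have hpqr : (1 : ℝ≥0∞) / 1 = 1 / q + 1 / p := by
    simp only [one_div]
    rw [inv_one, ← hpq, add_comm]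
  have hle : eLpNorm (fun x => g x * f x) 1 μ ≤ eLpNorm g q μ * eLpNorm f p μ := by
    simpa [smul_eq_mul, Pi.mul_def] using eLpNorm_smul_le_mul_eLpNorm (μ := μ) hf hg (hpqr := ⟨by simpa [one_div] using hpqr.symm⟩)
  have hle' : eLpNorm (fun x => f x * g x) 1 μ ≤ eLpNorm f p μ * eLpNorm g q μ := by
    simpa [mul_comm] using hle
  have hmem : MemLp (fun x => f x * g x) 1 μ :=
    ⟨hf.mul hg, lt_of_le_of_lt hle' (ENNReal.mul_lt_top hfp.lt_top hgq.lt_top)⟩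
  have hint : Integrable (fun x => f x * g x) μ := memLp_one_iff_integrable.mp hmem
  refine ⟨hint, ?_⟩
  have h1 : |∫ x, f x * g x ∂μ| ≤ ∫ x, ‖f x * g x‖ ∂μ := by
    simpa [Real.norm_eq_abs] using norm_integral_le_integral_norm (fun x => f x * g x) (μ := μ)
  have h2 : ∫ x, ‖f x * g x‖ ∂μ = (eLpNorm (fun x => f x * g x) 1 μ).toReal := by
    rw [integral_norm_eq_lintegral_enorm hmem.1, eLpNorm_one_eq_lintegral_enorm]
  calc |∫ x, f x * g x ∂μ| ≤ (eLpNorm (fun x => f x * g x) 1 μ).toReal := by rw [← h2]; exact h1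
    _ ≤ (eLpNorm f p μ * eLpNorm g q μ).toReal :=
        ENNReal.toReal_mono (ENNReal.mul_ne_top hfp hgq) hle'
    _ = (eLpNorm f p μ).toReal * (eLpNorm g q μ).toReal := ENNReal.toReal_mul

lemma map_comap_compProd (μ : Measure (α × β)) [IsFiniteMeasure μ]
    (κ : Kernel α γ) [IsSFiniteKernel κ] :
    (μ ⊗ₘ (κ.comap Prod.fst measurable_fst)).map (fun z => (z.1.1, z.2))
      = (μ.map Prod.fst) ⊗ₘ κ := by
  have hg : Measurable (fun z : (α × β) × γ => (z.1.1, z.2)) :=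
    (measurable_fst.fst).prodMk measurable_snd
  haveI : IsFiniteMeasure (μ.map Prod.fst) := Measure.isFiniteMeasure_map μ Prod.fst
  ext s hs
  rw [Measure.map_apply hg hs, Measure.compProd_apply (hg hs),
    Measure.compProd_apply hs, lintegral_map (Kernel.measurable_kernel_prodMk_left hs)
      measurable_fst]
  simp only [Kernel.comap_apply]
  rfl

end Helpers


def PlanSet (R : Set (Measure ℝ)) (m : Measure ℝ) : Set ℝ :=
  {v : ℝ | ∃ π : Measure (ℝ × ℝ), IsProbabilityMeasure π ∧
    π.map Prod.fst = m ∧ π.map Prod.snd ∈ R ∧ v = ∫ z : ℝ × ℝ, z.1 * z.2 ∂π}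

lemma chi_eq (R : Set (Measure ℝ)) (m : Measure ℝ) : chi R m = sSup (PlanSet R m) := rfl

lemma mmom_map {α : Type*} [MeasurableSpace α] {μ : Measure α} {h : α → ℝ}
    (hh : AEMeasurable h μ) (s : ℝ≥0∞) : Mmom s (μ.map h) = eLpNorm h s μ := by
  rw [Mmom]
  exact eLpNorm_map_measure (g := fun x : ℝ => x) measurable_id.aestronglyMeasurable hh

lemma plan_move {Ω : Type} [MeasurableSpace Ω] (P : Measure Ω) [IsProbabilityMeasure P]
    (X₁ X₂ : Ω → ℝ) (hm₁ : Measurable X₁) (hm₂ : Measurable X₂)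
    (π : Measure (ℝ × ℝ)) [IsProbabilityMeasure π] (hfst : π.map Prod.fst = P.map X₁)
    (p q : ℝ≥0∞) (hpq : p⁻¹ + q⁻¹ = 1) (hX₁ : MemLp X₁ p P) (hX₂ : MemLp X₂ p P)
    (hLr : Mmom q (π.map Prod.snd) ≠ ⊤) :
    ∃ π' : Measure (ℝ × ℝ), IsProbabilityMeasure π' ∧ π'.map Prod.fst = P.map X₂ ∧
      π'.map Prod.snd = π.map Prod.snd ∧
      |(∫ z : ℝ × ℝ, z.1 * z.2 ∂π') - ∫ z : ℝ × ℝ, z.1 * z.2 ∂π| ≤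
        (eLpNorm (fun ω => X₂ ω - X₁ ω) p P).toReal * (Mmom q (π.map Prod.snd)).toReal := by
  classical
  set pair : Ω → ℝ × ℝ := fun ω => (X₁ ω, X₂ ω) with hpair_def
  have hpair : Measurable pair := hm₁.prodMk hm₂
  set μ : Measure (ℝ × ℝ) := P.map pair with hμ_def
  haveI : IsProbabilityMeasure μ := Measure.isProbabilityMeasure_map hpair.aemeasurable
  set κ : Kernel ℝ ℝ := π.condKernel with hκ_def
  set κ' : Kernel (ℝ × ℝ) ℝ := κ.comap Prod.fst measurable_fst with hκ'_def
  set τ : Measure ((ℝ × ℝ) × ℝ) := μ ⊗ₘ κ' with hτ_def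
  haveI : IsProbabilityMeasure τ := by rw [hτ_def]; infer_instance
  have hg₁ : Measurable (fun z : (ℝ × ℝ) × ℝ => (z.1.1, z.2)) :=
    (measurable_fst.fst).prodMk measurable_snd
  have hg₂ : Measurable (fun z : (ℝ × ℝ) × ℝ => (z.1.2, z.2)) :=
    (measurable_fst.snd).prodMk measurable_snd
  -- first marginal of μ
  have hμfst : μ.map Prod.fst = P.map X₁ := by
    rw [hμ_def, Measure.map_map measurable_fst hpair]
    rfl
  have hμsnd : μ.map Prod.snd = P.map X₂ := by
    rw [hμ_def, Measure.map_map measurable_snd hpair]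
    rfl
  -- τ mapped back gives π
  have hA : τ.map (fun z : (ℝ × ℝ) × ℝ => (z.1.1, z.2)) = π := by
    rw [hτ_def, map_comap_compProd μ κ, hμfst, ← hfst]
    exact Measure.disintegrate π π.condKernel
  have hτfst : τ.map Prod.fst = μ := Measure.fst_compProd μ κ'
  set π' : Measure (ℝ × ℝ) := τ.map (fun z : (ℝ × ℝ) × ℝ => (z.1.2, z.2)) with hπ'_def
  haveI : IsProbabilityMeasure π' := Measure.isProbabilityMeasure_map hg₂.aemeasurable
  have hπ'fst : π'.map Prod.fst = P.map X₂ := by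
    rw [hπ'_def, Measure.map_map measurable_fst hg₂]
    have : (Prod.fst ∘ fun z : (ℝ × ℝ) × ℝ => (z.1.2, z.2))
        = (Prod.snd ∘ Prod.fst : (ℝ × ℝ) × ℝ → ℝ) := rfl
    rw [this, ← Measure.map_map measurable_snd measurable_fst, hτfst, hμsnd]
  have hπ'snd : π'.map Prod.snd = π.map Prod.snd := by
    rw [hπ'_def, Measure.map_map measurable_snd hg₂, ← hA,
      Measure.map_map measurable_snd hg₁]
    rfl
  -- eLpNorm identities
  have e1 : eLpNorm (fun z : (ℝ × ℝ) × ℝ => z.1.1) p τ = eLpNorm X₁ p P := by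
    have h1 : eLpNorm (fun w : ℝ × ℝ => w.1) p (τ.map Prod.fst)
        = eLpNorm (fun z : (ℝ × ℝ) × ℝ => z.1.1) p τ :=
      eLpNorm_map_measure (g := fun w : ℝ × ℝ => w.1)
        measurable_fst.aestronglyMeasurable measurable_fst.aemeasurable
    have h2 : eLpNorm (fun w : ℝ × ℝ => w.1) p (P.map pair) = eLpNorm X₁ p P :=
      eLpNorm_map_measure (g := fun w : ℝ × ℝ => w.1)
        measurable_fst.aestronglyMeasurable hpair.aemeasurable
    rw [← h1, hτfst, hμ_def, h2]
  have e2 : eLpNorm (fun z : (ℝ × ℝ) × ℝ => z.1.2) p τ = eLpNorm X₂ p P := by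
    have h1 : eLpNorm (fun w : ℝ × ℝ => w.2) p (τ.map Prod.fst)
        = eLpNorm (fun z : (ℝ × ℝ) × ℝ => z.1.2) p τ :=
      eLpNorm_map_measure (g := fun w : ℝ × ℝ => w.2)
        measurable_snd.aestronglyMeasurable measurable_fst.aemeasurable
    have h2 : eLpNorm (fun w : ℝ × ℝ => w.2) p (P.map pair) = eLpNorm X₂ p P :=
      eLpNorm_map_measure (g := fun w : ℝ × ℝ => w.2)
        measurable_snd.aestronglyMeasurable hpair.aemeasurable
    rw [← h1, hτfst, hμ_def, h2]
  have ediff : eLpNorm (fun z : (ℝ × ℝ) × ℝ => z.1.2 - z.1.1) p τ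
      = eLpNorm (fun ω => X₂ ω - X₁ ω) p P := by
    have h1 : eLpNorm (fun w : ℝ × ℝ => w.2 - w.1) p (τ.map Prod.fst)
        = eLpNorm (fun z : (ℝ × ℝ) × ℝ => z.1.2 - z.1.1) p τ :=
      eLpNorm_map_measure (g := fun w : ℝ × ℝ => w.2 - w.1)
        (measurable_snd.sub measurable_fst).aestronglyMeasurable measurable_fst.aemeasurable
    have h2 : eLpNorm (fun w : ℝ × ℝ => w.2 - w.1) p (P.map pair)
        = eLpNorm (fun ω => X₂ ω - X₁ ω) p P :=
      eLpNorm_map_measure (g := fun w : ℝ × ℝ => w.2 - w.1)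
        (measurable_snd.sub measurable_fst).aestronglyMeasurable hpair.aemeasurable
    rw [← h1, hτfst, hμ_def, h2]
  have hτsnd : τ.map Prod.snd = π.map Prod.snd := by
    rw [← hA, Measure.map_map measurable_snd hg₁]
    rfl
  have e3 : eLpNorm (fun z : (ℝ × ℝ) × ℝ => z.2) q τ = Mmom q (π.map Prod.snd) := by
    rw [← hτsnd, mmom_map measurable_snd.aemeasurable]
  -- integrability
  have hint1 : Integrable (fun z : (ℝ × ℝ) × ℝ => z.1.1 * z.2) τ :=
    (holder_aux hpq τ _ _ (measurable_fst.fst.aestronglyMeasurable)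
      (measurable_snd.aestronglyMeasurable) (by rw [e1]; exact hX₁.2.ne)
      (by rw [e3]; exact hLr)).1
  have hint2 : Integrable (fun z : (ℝ × ℝ) × ℝ => z.1.2 * z.2) τ :=
    (holder_aux hpq τ _ _ (measurable_fst.snd.aestronglyMeasurable)
      (measurable_snd.aestronglyMeasurable) (by rw [e2]; exact hX₂.2.ne)
      (by rw [e3]; exact hLr)).1
  -- value identities
  have hv' : (∫ z : ℝ × ℝ, z.1 * z.2 ∂π') = ∫ z : (ℝ × ℝ) × ℝ, z.1.2 * z.2 ∂τ := by
    rw [hπ'_def]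
    exact integral_map hg₂.aemeasurable
      ((measurable_fst.mul measurable_snd).aestronglyMeasurable)
  have hv : (∫ z : ℝ × ℝ, z.1 * z.2 ∂π) = ∫ z : (ℝ × ℝ) × ℝ, z.1.1 * z.2 ∂τ := by
    rw [← hA]
    exact integral_map hg₁.aemeasurable
      ((measurable_fst.mul measurable_snd).aestronglyMeasurable)
  refine ⟨π', inferInstance, hπ'fst, hπ'snd, ?_⟩
  rw [hv', hv, ← integral_sub hint2 hint1]
  have hfun : (fun z : (ℝ × ℝ) × ℝ => z.1.2 * z.2 - z.1.1 * z.2)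
      = fun z : (ℝ × ℝ) × ℝ => (z.1.2 - z.1.1) * z.2 := by
    funext z; ring
  rw [hfun]
  have := (holder_aux hpq τ (fun z : (ℝ × ℝ) × ℝ => z.1.2 - z.1.1)
      (fun z : (ℝ × ℝ) × ℝ => z.2)
      ((measurable_fst.snd.sub measurable_fst.fst).aestronglyMeasurable)
      (measurable_snd.aestronglyMeasurable)
      (by rw [ediff]; exact (hX₂.sub hX₁).2.ne) (by rw [e3]; exact hLr)).2
  rw [ediff, e3] at this
  convert this using 3

lemma planSet_bound {p q : ℝ≥0∞} (hpq : p⁻¹ + q⁻¹ = 1) {R : Set (Measure ℝ)}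
    (hL : (⨆ r ∈ R, Mmom q r) ≠ ⊤) {m : Measure ℝ} (hm : Mmom p m ≠ ⊤)
    {v : ℝ} (hv : v ∈ PlanSet R m) :
    |v| ≤ (Mmom p m).toReal * (⨆ r ∈ R, Mmom q r).toReal := by
  obtain ⟨π, hprob, hfst, hsnd, rfl⟩ := hv
  haveI := hprob
  have h1 : eLpNorm (fun z : ℝ × ℝ => z.1) p π = Mmom p m := by
    rw [← hfst, Mmom]
    exact (eLpNorm_map_measure (g := fun x : ℝ => x)
      measurable_id.aestronglyMeasurable measurable_fst.aemeasurable).symm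
  have h2 : eLpNorm (fun z : ℝ × ℝ => z.2) q π = Mmom q (π.map Prod.snd) := by
    rw [Mmom]
    exact (eLpNorm_map_measure (g := fun x : ℝ => x)
      measurable_id.aestronglyMeasurable measurable_snd.aemeasurable).symm
  have hle : Mmom q (π.map Prod.snd) ≤ ⨆ r ∈ R, Mmom q r := le_biSup _ hsnd
  have h2ne : eLpNorm (fun z : ℝ × ℝ => z.2) q π ≠ ⊤ := by
    rw [h2]; exact (lt_of_le_of_lt hle (lt_top_iff_ne_top.mpr hL)).ne
  have := (holder_aux hpq π (fun z : ℝ × ℝ => z.1) (fun z : ℝ × ℝ => z.2)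
    measurable_fst.aestronglyMeasurable measurable_snd.aestronglyMeasurable
    (by rw [h1]; exact hm) h2ne).2
  calc |∫ z : ℝ × ℝ, z.1 * z.2 ∂π|
      ≤ (eLpNorm (fun z : ℝ × ℝ => z.1) p π).toReal
        * (eLpNorm (fun z : ℝ × ℝ => z.2) q π).toReal := this
    _ ≤ (Mmom p m).toReal * (⨆ r ∈ R, Mmom q r).toReal := by
        rw [h1, h2]
        exact mul_le_mul_of_nonneg_left (ENNReal.toReal_mono hL hle) ENNReal.toReal_nonneg

lemma planSet_nonempty {R : Set (Measure ℝ)} (hR1 : ∀ r ∈ R, IsProbabilityMeasure r)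
    {r : Measure ℝ} (hr : r ∈ R) (m : Measure ℝ) [IsProbabilityMeasure m] :
    (PlanSet R m).Nonempty := by
  haveI := hR1 r hr
  refine ⟨∫ z : ℝ × ℝ, z.1 * z.2 ∂(m.prod r), m.prod r, inferInstance, ?_, ?_, rfl⟩
  · exact Measure.fst_prod
  · show (m.prod r).snd ∈ R
    rw [Measure.snd_prod]
    exact hr

lemma chi_le_chi_add (p q : ℝ≥0∞) (hpq : p⁻¹ + q⁻¹ = 1)
    (R : Set (Measure ℝ)) (hR1 : OTone q R)
    (Ω : Type) [MeasurableSpace Ω] (P : Measure Ω) [IsProbabilityMeasure P]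
    (X₁ X₂ : Ω → ℝ) (hm₁ : Measurable X₁) (hm₂ : Measurable X₂)
    (hX₁ : MemLp X₁ p P) (hX₂ : MemLp X₂ p P) :
    chi R (P.map X₁) ≤ chi R (P.map X₂) +
      (⨆ r ∈ R, Mmom q r).toReal * (eLpNorm (fun ω => X₂ ω - X₁ ω) p P).toReal := by
  classical
  haveI : IsProbabilityMeasure (P.map X₁) := Measure.isProbabilityMeasure_map hm₁.aemeasurable
  haveI : IsProbabilityMeasure (P.map X₂) := Measure.isProbabilityMeasure_map hm₂.aemeasurable
  set L : ℝ≥0∞ := ⨆ r ∈ R, Mmom q r with hL_def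
  have hLne : L ≠ ⊤ := hR1.2.ne
  set D : ℝ≥0∞ := eLpNorm (fun ω => X₂ ω - X₁ ω) p P with hD_def
  have hDne : D ≠ ⊤ := by
    rw [hD_def]
    exact (hX₂.sub hX₁).2.ne
  rcases Set.eq_empty_or_nonempty R with hRe | ⟨r, hr⟩
  · have h1 : PlanSet R (P.map X₁) = ∅ := by
      rw [hRe]; ext v; simp [PlanSet]
    have h2 : PlanSet R (P.map X₂) = ∅ := by
      rw [hRe]; ext v; simp [PlanSet]
    rw [chi_eq, chi_eq, h1, h2, Real.sSup_empty]
    positivity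
  · have hm₂' : Mmom p (P.map X₂) ≠ ⊤ := by
      rw [mmom_map hm₂.aemeasurable]; exact hX₂.2.ne
    have hbdd₂ : BddAbove (PlanSet R (P.map X₂)) :=
      ⟨(Mmom p (P.map X₂)).toReal * L.toReal,
        fun v hv => (abs_le.mp (planSet_bound hpq hLne hm₂' hv)).2⟩
    have hne₁ : (PlanSet R (P.map X₁)).Nonempty := planSet_nonempty hR1.1 hr _
    rw [chi_eq, chi_eq]
    refine csSup_le hne₁ (fun v hv => ?_)
    obtain ⟨π, hprob, hfst, hsnd, rfl⟩ := hv
    haveI := hprob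
    have hLr_le : Mmom q (π.map Prod.snd) ≤ L := le_biSup _ hsnd
    have hLrne : Mmom q (π.map Prod.snd) ≠ ⊤ := (lt_of_le_of_lt hLr_le hLne.lt_top).ne
    obtain ⟨π', hπ'prob, hπ'fst, hπ'snd, hbound⟩ :=
      plan_move P X₁ X₂ hm₁ hm₂ π hfst p q hpq hX₁ hX₂ hLrne
    haveI := hπ'prob
    have hv'mem : (∫ z : ℝ × ℝ, z.1 * z.2 ∂π') ∈ PlanSet R (P.map X₂) :=
      ⟨π', hπ'prob, hπ'fst, by rw [hπ'snd]; exact hsnd, rfl⟩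
    have h1 : (∫ z : ℝ × ℝ, z.1 * z.2 ∂π) ≤ (∫ z : ℝ × ℝ, z.1 * z.2 ∂π')
        + D.toReal * (Mmom q (π.map Prod.snd)).toReal := by
      have := (abs_le.mp hbound).1
      linarith
    have h2 : (∫ z : ℝ × ℝ, z.1 * z.2 ∂π') ≤ sSup (PlanSet R (P.map X₂)) :=
      le_csSup hbdd₂ hv'mem
    have h3 : D.toReal * (Mmom q (π.map Prod.snd)).toReal ≤ L.toReal * D.toReal := by
      rw [mul_comm]
      exact mul_le_mul_of_nonneg_right (ENNReal.toReal_mono hLne hLr_le)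
        ENNReal.toReal_nonneg
    linarith

/-- Lipschitz continuity of the transport-based risk measure: for `R` satisfying (OT)(i)
with `L_R = sup_{r ∈ R} M_q(r)`, one has `|ρ_R(X₂) − ρ_R(X₁)| ≤ L_R ‖X₂ − X₁‖_{L^p}`. -/
theorem rho_lipschitz
    (p q : ℝ≥0∞) (hp1 : 1 ≤ p) (hptop : p ≠ ⊤) (hpq : p⁻¹ + q⁻¹ = 1)
    (R : Set (Measure ℝ)) (hR1 : OTone q R)
    (Ω : Type) [MeasurableSpace Ω] (P : Measure Ω) [IsProbabilityMeasure P]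
    (X₁ X₂ : Ω → ℝ) (hX₁ : MemLp X₁ p P) (hX₂ : MemLp X₂ p P) :
    |chi R (P.map X₂) - chi R (P.map X₁)| ≤
      (⨆ r ∈ R, Mmom q r).toReal * (eLpNorm (fun ω => X₂ ω - X₁ ω) p P).toReal := by
  classical
  set Y₁ : Ω → ℝ := hX₁.1.mk X₁ with hY₁_def
  set Y₂ : Ω → ℝ := hX₂.1.mk X₂ with hY₂_def
  have hm₁ : Measurable Y₁ := hX₁.1.stronglyMeasurable_mk.measurable
  have hm₂ : Measurable Y₂ := hX₂.1.stronglyMeasurable_mk.measurable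
  have hae₁ : X₁ =ᵐ[P] Y₁ := hX₁.1.ae_eq_mk
  have hae₂ : X₂ =ᵐ[P] Y₂ := hX₂.1.ae_eq_mk
  have hmap₁ : P.map X₁ = P.map Y₁ := Measure.map_congr hae₁
  have hmap₂ : P.map X₂ = P.map Y₂ := Measure.map_congr hae₂
  have hY₁ : MemLp Y₁ p P := hX₁.ae_eq hae₁
  have hY₂ : MemLp Y₂ p P := hX₂.ae_eq hae₂
  have hsnorm : eLpNorm (fun ω => X₂ ω - X₁ ω) p P = eLpNorm (fun ω => Y₂ ω - Y₁ ω) p P := by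
    apply eLpNorm_congr_ae
    filter_upwards [hae₁, hae₂] with ω h1 h2
    rw [h1, h2]
  have hcomm : eLpNorm (fun ω => Y₁ ω - Y₂ ω) p P = eLpNorm (fun ω => Y₂ ω - Y₁ ω) p P := by
    have hneg : (fun ω => Y₁ ω - Y₂ ω) = -(fun ω => Y₂ ω - Y₁ ω) := by
      funext ω; simp
    rw [hneg, eLpNorm_neg]
  rw [hmap₁, hmap₂, hsnorm]
  rw [abs_sub_le_iff]
  constructor
  · have := chi_le_chi_add p q hpq R hR1 Ω P Y₂ Y₁ hm₂ hm₁ hY₂ hY₁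
    rw [hcomm] at this
    linarith
  · have := chi_le_chi_add p q hpq R hR1 Ω P Y₁ Y₂ hm₁ hm₂ hY₁ hY₂
    linarith
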